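/- arXiv:0812.1878 — 2 statements merged into one kernel-verified Lean document; each statement's English description precedes it below -/
import Mathlib

section
/- The series ∑_{u=1}^∞ ((u^2 + 1/4) tan(1/2) cos u - u sin u)/(4u^2 - 1)^2 converges to -tan(1/2)/8. -/
noncomputable def gAux (n : ℕ) : ℝ :=
  Real.sin ((n : ℝ) + 1 / 2) / (8 * (2 * (n : ℝ) + 1) ^ 2 * Real.cos (1 / 2))

lemma cos_half_pos : 0 < Real.cos (1 / 2) := by
  apply Real.cos_pos_of_mem_Ioo
  constructor
  · nlinarith [Real.pi_gt_three]
  · nlinarith [Real.pi_gt_three]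

lemma gAux_summable : Summable gAux := by
  have hc := cos_half_pos
  apply Summable.of_norm_bounded
    (g := fun n : ℕ => (1 / (8 * Real.cos (1 / 2))) * (1 / ((n : ℝ) + 1) ^ 2))
  · exact (Real.summable_one_div_nat_pow.2 one_lt_two |>.comp_injective
      (add_right_injective 1) |>.congr (by intro n; push_cast; simp [Function.comp]; ring)).mul_left _
  · intro n
    have h1 : (0:ℝ) < (2 * (n : ℝ) + 1) ^ 2 := by positivity
    have h2 : ((n:ℝ) + 1) ^ 2 ≤ (2 * (n : ℝ) + 1) ^ 2 := by nlinarith [Nat.cast_nonneg (α := ℝ) n]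
    have hs : |Real.sin ((n : ℝ) + 1 / 2)| ≤ 1 := Real.abs_sin_le_one _
    rw [Real.norm_eq_abs, gAux, abs_div]
    rw [abs_of_pos (by positivity : (0:ℝ) < 8 * (2 * (n : ℝ) + 1) ^ 2 * Real.cos (1 / 2))]
    rw [div_le_iff₀ (by positivity)]
    have hn1 : (0:ℝ) < ((n:ℝ)+1)^2 := by positivity
    calc |Real.sin ((n : ℝ) + 1 / 2)| ≤ 1 := hs
      _ ≤ 1 / (8 * Real.cos (1 / 2)) * (1 / ((n : ℝ) + 1) ^ 2) *
          (8 * (2 * (n : ℝ) + 1) ^ 2 * Real.cos (1 / 2)) := by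
        rw [show (1:ℝ) / (8 * Real.cos (1/2)) * (1 / ((n:ℝ)+1)^2) *
            (8 * (2*(n:ℝ)+1)^2 * Real.cos (1/2)) = (2*(n:ℝ)+1)^2 / ((n:ℝ)+1)^2 by
          field_simp]
        rw [le_div_iff₀ hn1]
        linarith

theorem stmt_11 :
    HasSum (fun n : ℕ =>
      ((((n : ℝ) + 1) ^ 2 + 1 / 4) * Real.tan (1 / 2) * Real.cos ((n : ℝ) + 1)
          - ((n : ℝ) + 1) * Real.sin ((n : ℝ) + 1)) / (4 * ((n : ℝ) + 1) ^ 2 - 1) ^ 2)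
      (-(Real.tan (1 / 2) / 8)) := by
  have hc := cos_half_pos
  have hc' : Real.cos (1/2) ≠ 0 := ne_of_gt hc
  have key : ∀ n : ℕ,
      ((((n : ℝ) + 1) ^ 2 + 1 / 4) * Real.tan (1 / 2) * Real.cos ((n : ℝ) + 1)
          - ((n : ℝ) + 1) * Real.sin ((n : ℝ) + 1)) / (4 * ((n : ℝ) + 1) ^ 2 - 1) ^ 2
        = gAux (n + 1) - gAux n := by
    intro n
    have hx : (0:ℝ) ≤ (n:ℝ) := Nat.cast_nonneg n
    have d1 : (2 * (n : ℝ) + 1) ≠ 0 := by positivity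
    have d2 : (2 * ((n:ℝ)+1) + 1) ≠ 0 := by positivity
    have h1 : Real.sin (((n:ℝ)+1) + 1/2)
        = Real.sin ((n:ℝ)+1) * Real.cos (1/2) + Real.cos ((n:ℝ)+1) * Real.sin (1/2) :=
      Real.sin_add _ _
    have h2 : Real.sin ((n:ℝ) + 1/2)
        = Real.sin ((n:ℝ)+1) * Real.cos (1/2) - Real.cos ((n:ℝ)+1) * Real.sin (1/2) := by
      rw [show (n:ℝ) + 1/2 = ((n:ℝ)+1) - 1/2 by ring, Real.sin_sub]
    simp only [gAux, Nat.cast_add, Nat.cast_one]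
    rw [h1, h2, Real.tan_eq_sin_div_cos]
    have d3 : (4 * ((n : ℝ) + 1) ^ 2 - 1) ≠ 0 := by nlinarith
    rw [show (4 * ((n : ℝ) + 1) ^ 2 - 1) = (2 * (n:ℝ) + 1) * (2 * ((n:ℝ)+1) + 1) by ring]
    field_simp
    ring
  have hS := gAux_summable
  have hg : HasSum gAux (∑' n, gAux n) := hS.hasSum
  have hshift : HasSum (fun n => gAux (n + 1)) ((∑' n, gAux n) - gAux 0) := by
    rw [hasSum_nat_add_iff 1]
    simpa using hg
  have hsub := hshift.sub hg
  have : ((∑' n, gAux n) - gAux 0 - ∑' n, gAux n) = -(Real.tan (1/2) / 8) := by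
    have : gAux 0 = Real.tan (1/2) / 8 := by
      simp [gAux, Real.tan_eq_sin_div_cos]
      ring
    rw [this]; ring
  rw [this] at hsub
  exact hsub.congr_fun fun n => (key n).symm ▸ rfl
end

section
/- For all natural numbers k ≥ 1 and n ≥ 1, the alternating sum of powers satisfies ∑_{u=1}^n (-1)^{u-1} u^{k-1} = ((2^k - 1)/k) B_k - ((-1)^n / k) ∑_{u=1}^k (2^u - 1) binom(k, u) B_u n^{k-u}, where B_u are Bernoulli numbers with the convention B_1 = 1/2. -/
open PowerSeries Finset Nat

lemma key_ps : (rescale (2:ℚ) (bernoulli'PowerSeries ℚ)) * (exp ℚ + 1) =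
    2 * bernoulli'PowerSeries ℚ * exp ℚ := by
  have hexp : exp ℚ - 1 ≠ 0 := by
    simp only [exp, PowerSeries.ext_iff, Ne, not_forall]
    use 1
    simp [factorial_ne_zero]
  apply mul_right_cancel₀ hexp
  have h2 : rescale (2:ℚ) (exp ℚ) = exp ℚ ^ 2 := by
    rw [exp_pow_eq_rescale_exp]; norm_num
  calc rescale (2:ℚ) (bernoulli'PowerSeries ℚ) * (exp ℚ + 1) * (exp ℚ - 1)
      = rescale (2:ℚ) (bernoulli'PowerSeries ℚ) * (rescale (2:ℚ) (exp ℚ) - 1) := by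
        rw [h2]; ring
    _ = rescale (2:ℚ) (bernoulli'PowerSeries ℚ * (exp ℚ - 1)) := by
        rw [map_mul, map_sub, map_one]
    _ = rescale (2:ℚ) (X * exp ℚ) := by rw [bernoulli'PowerSeries_mul_exp_sub_one]
    _ = (C (2:ℚ) * X) * (exp ℚ ^ 2) := by rw [map_mul, rescale_X, h2]
    _ = 2 * bernoulli'PowerSeries ℚ * exp ℚ * (exp ℚ - 1) := by
        rw [show (2 : ℚ⟦X⟧) = C (2:ℚ) from rfl]  -- may fail
        rw [mul_assoc (C (2:ℚ)) (bernoulli'PowerSeries ℚ)]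
        rw [show (C (2:ℚ)) * (bernoulli'PowerSeries ℚ * exp ℚ) * (exp ℚ - 1) = (C (2:ℚ)) * (bernoulli'PowerSeries ℚ * (exp ℚ - 1)) * exp ℚ by ring, bernoulli'PowerSeries_mul_exp_sub_one]
        ring

lemma ext_r (r : ℕ) :
    ∑ p ∈ antidiagonal r, (2:ℚ)^p.1 * (bernoulli' p.1 / p.1 !) *
        ((p.2 ! : ℚ)⁻¹ + if p.2 = 0 then 1 else 0) =
      ∑ p ∈ antidiagonal r, 2 * (bernoulli' p.1 / p.1 !) * (p.2 ! : ℚ)⁻¹ := by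
  have h := congrArg (coeff r) key_ps
  rw [coeff_mul, coeff_mul] at h
  simp only [coeff_rescale, bernoulli'PowerSeries, coeff_mk, map_add, coeff_one, coeff_exp,
    Algebra.algebraMap_self, RingHom.id_apply, one_div] at h
  convert h using 2 with p hp p hp
  rw [show (2 : ℚ⟦X⟧) = C (2:ℚ) from rfl, coeff_C_mul, coeff_mk]

lemma bstar (r : ℕ) :
    ∑ i ∈ range (r + 1), (r.choose i : ℚ) * (2 - 2 ^ i) * bernoulli' i
      = 2 ^ r * bernoulli' r := by
  have h := ext_r r
  rw [Finset.Nat.sum_antidiagonal_eq_sum_range_succ_mk,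
    Finset.Nat.sum_antidiagonal_eq_sum_range_succ_mk] at h
  simp_rw [mul_add] at h
  rw [Finset.sum_add_distrib] at h
  have hsingle : ∑ i ∈ range (r + 1),
      (2:ℚ)^i * (bernoulli' i / i !) * (if r - i = 0 then (1:ℚ) else 0)
      = 2 ^ r * (bernoulli' r / r !) := by
    rw [Finset.sum_eq_single_of_mem r (Finset.self_mem_range_succ r)]
    · simp
    · intro i hi hne
      rw [if_neg, mul_zero]
      have := Finset.mem_range.mp hi
      omega
  rw [hsingle] at h
  have key : ∀ i ∈ range (r+1), (r.choose i : ℚ) * (2 - 2^i) * bernoulli' i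
      = 2 * (bernoulli' i / i !) * (((r - i)! : ℚ))⁻¹ * (r ! : ℚ)
        - 2^i * (bernoulli' i / i !) * (((r - i)! : ℚ))⁻¹ * (r ! : ℚ) := by
    intro i hi
    rw [Nat.cast_choose ℚ (Nat.lt_succ_iff.mp (Finset.mem_range.mp hi))]
    have h1 : (i ! : ℚ) ≠ 0 := Nat.cast_ne_zero.mpr i.factorial_ne_zero
    have h2 : (((r - i)!) : ℚ) ≠ 0 := Nat.cast_ne_zero.mpr (r - i).factorial_ne_zero
    field_simp
  calc ∑ i ∈ range (r+1), (r.choose i:ℚ) * (2-2^i) * bernoulli' i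
      = ∑ i ∈ range (r+1), (2 * (bernoulli' i / i !) * (((r-i)! :ℚ))⁻¹ * (r ! : ℚ)
          - 2^i * (bernoulli' i / i !) * (((r-i)!:ℚ))⁻¹ * (r ! : ℚ)) := Finset.sum_congr rfl key
    _ = (∑ i ∈ range (r+1), 2 * (bernoulli' i / i !) * (((r-i)!:ℚ))⁻¹) * (r ! : ℚ)
        - (∑ i ∈ range (r+1), 2^i * (bernoulli' i / i !) * (((r-i)!:ℚ))⁻¹) * (r ! : ℚ) := by
        rw [Finset.sum_sub_distrib, Finset.sum_mul, Finset.sum_mul]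
    _ = 2^r * (bernoulli' r / r !) * (r ! : ℚ) := by rw [← h]; ring
    _ = 2 ^ r * bernoulli' r := by
        have h3 : (r ! : ℚ) ≠ 0 := Nat.cast_ne_zero.mpr r.factorial_ne_zero
        field_simp

lemma choose_tri {k i j : ℕ} (hij : i + j ≤ k) :
    k.choose i * (k - i).choose j = k.choose j * (k - j).choose i := by
  have h1 := Nat.choose_mul (n := k) (Nat.le_add_right i j)
  have h2 := Nat.choose_mul (n := k) (Nat.le_add_left j i)
  rw [Nat.add_sub_cancel_left] at h1
  rw [Nat.add_sub_cancel] at h2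
  have h3 : (i + j).choose i = (i + j).choose j := by
    rw [← Nat.choose_symm (Nat.le_add_left j i), Nat.add_sub_cancel]
  rw [← h1, ← h2, h3]

lemma odd_id (k : ℕ) (x : ℚ) :
    ∑ i ∈ range (k + 1), (k.choose i : ℚ) * (2 - 2 ^ i) * bernoulli' i * (2 * x + 1) ^ (k - i)
      = 2 ^ k * ∑ i ∈ range (k + 1), (k.choose i : ℚ) * bernoulli' i * x ^ (k - i) := by
  have hexp : ∀ i ∈ range (k + 1), (2 * x + 1) ^ (k - i)
      = ∑ j ∈ range (k + 1), ((k - i).choose j : ℚ) * (2 * x) ^ j := by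
    intro i hi
    rw [add_pow]
    rw [Finset.sum_subset (Finset.range_subset_range.mpr (by omega : k - i + 1 ≤ k + 1))]
    · exact Finset.sum_congr rfl fun j hj => by ring
    · intro j hj hnj
      simp [Nat.choose_eq_zero_of_lt (by simp at hj hnj; omega : k - i < j)]
  calc ∑ i ∈ range (k + 1), (k.choose i : ℚ) * (2 - 2 ^ i) * bernoulli' i * (2 * x + 1) ^ (k - i)
      = ∑ i ∈ range (k + 1), ∑ j ∈ range (k + 1),
          (k.choose i : ℚ) * (2 - 2 ^ i) * bernoulli' i * (((k - i).choose j : ℚ) * (2 * x) ^ j) := by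
        refine Finset.sum_congr rfl fun i hi => ?_
        rw [hexp i hi, Finset.mul_sum]
    _ = ∑ j ∈ range (k + 1), ∑ i ∈ range (k + 1),
          (k.choose i : ℚ) * (2 - 2 ^ i) * bernoulli' i * (((k - i).choose j : ℚ) * (2 * x) ^ j) :=
        Finset.sum_comm
    _ = ∑ j ∈ range (k + 1), (k.choose j : ℚ) * 2 ^ (k - j) * bernoulli' (k - j) * (2 * x) ^ j := by
        refine Finset.sum_congr rfl fun j hj => ?_
        have hjk : j ≤ k := Nat.lt_succ_iff.mp (Finset.mem_range.mp hj)
        rw [← Finset.sum_subset (Finset.range_subset_range.mpr (by omega : k - j + 1 ≤ k + 1))]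
        · have : ∀ i ∈ range (k - j + 1),
              (k.choose i : ℚ) * (2 - 2 ^ i) * bernoulli' i * (((k - i).choose j : ℚ) * (2 * x) ^ j)
              = ((k.choose j : ℚ) * (2 * x) ^ j) * ((k - j).choose i * (2 - 2 ^ i) * bernoulli' i) := by
            intro i hi
            have hik : i + j ≤ k := by
              have := Finset.mem_range.mp hi; omega
            have hc : (k.choose i : ℚ) * ((k - i).choose j : ℚ)
                = (k.choose j : ℚ) * ((k - j).choose i : ℚ) := by
              exact_mod_cast congrArg (Nat.cast : ℕ → ℚ) (choose_tri hik)
            linear_combination (2 - 2 ^ i) * bernoulli' i * (2 * x) ^ j * hc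
          rw [Finset.sum_congr rfl this, ← Finset.mul_sum, bstar (k - j)]
          ring
        · intro i hi hni
          have hik : k - i < j := by simp at hi hni; omega
          rw [Nat.choose_eq_zero_of_lt hik, Nat.cast_zero, zero_mul, mul_zero]
    _ = 2 ^ k * ∑ i ∈ range (k + 1), (k.choose i : ℚ) * bernoulli' i * x ^ (k - i) := by
        rw [Finset.mul_sum]
        conv_rhs => rw [← Finset.sum_range_reflect]
        refine Finset.sum_congr rfl fun j hj => ?_
        have hjk : j ≤ k := Nat.lt_succ_iff.mp (Finset.mem_range.mp hj)
        have e1 : k + 1 - 1 - j = k - j := by omega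
        rw [e1, Nat.choose_symm hjk, Nat.sub_sub_self hjk]
        have e2 : (2:ℚ) ^ (k - j) * 2 ^ j = 2 ^ k := by
          rw [← pow_add]; congr 1; omega
        rw [mul_pow]
        linear_combination (k.choose j : ℚ) * bernoulli' (k - j) * x ^ j * e2

lemma alt_split (k : ℕ) (hk : 1 ≤ k) (n : ℕ) :
    ∑ u ∈ Finset.Icc 1 n, (-1:ℚ)^(u-1) * (u:ℚ)^(k-1)
      = ∑ u ∈ Finset.Icc 1 n, (u:ℚ)^(k-1)
        - 2^k * ∑ j ∈ Finset.Icc 1 (n/2), (j:ℚ)^(k-1) := by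
  induction n with
  | zero => simp
  | succ n ih =>
    rw [Finset.sum_Icc_succ_top (by omega : 1 ≤ n+1),
      Finset.sum_Icc_succ_top (by omega : 1 ≤ n+1), ih]
    rcases Nat.even_or_odd n with he | ho
    · have h2 : (n+1)/2 = n/2 := by obtain ⟨m, rfl⟩ := he; omega
      have hsgn : (-1:ℚ)^(n+1-1) = 1 := by
        rw [Nat.add_sub_cancel]; exact he.neg_one_pow
      rw [h2, hsgn]
      ring
    · have h2 : (n+1)/2 = n/2 + 1 := by obtain ⟨m, rfl⟩ := ho; omega
      have hsgn : (-1:ℚ)^(n+1-1) = -1 := by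
        rw [Nat.add_sub_cancel]; exact ho.neg_one_pow
      rw [h2, hsgn, Finset.sum_Icc_succ_top (by omega : 1 ≤ n/2+1)]
      have hkey : (2:ℚ)^k * ((n/2+1 : ℕ):ℚ)^(k-1) = 2 * ((n+1 : ℕ):ℚ)^(k-1) := by
        have e1 : (2:ℚ)^k = 2 * 2^(k-1) := by
          conv_lhs => rw [show k = 1 + (k-1) by omega]
          rw [pow_add, pow_one]
        have e2 : (2:ℚ)^(k-1) * ((n/2+1 : ℕ):ℚ)^(k-1) = ((n+1 : ℕ):ℚ)^(k-1) := by
          rw [← mul_pow]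
          congr 1
          have : 2 * (n/2+1) = n + 1 := by omega
          push_cast [← this]
          ring
        rw [e1, mul_assoc, e2]
      push_cast at hkey ⊢
      linarith [hkey]

theorem stmt_14 (k n : ℕ) (hk : 1 ≤ k) (hn : 1 ≤ n) :
    ∑ u ∈ Finset.Icc 1 n, (-1 : ℚ) ^ (u - 1) * (u : ℚ) ^ (k - 1) =
      ((2 ^ k - 1) / k) * bernoulli' k -
        ((-1 : ℚ) ^ n / k) *
          ∑ u ∈ Finset.Icc 1 k, (2 ^ u - 1) * (k.choose u) * bernoulli' u * (n : ℚ) ^ (k - u) := by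
  have hk0 : (k:ℚ) ≠ 0 := Nat.cast_ne_zero.mpr (by omega)
  have hS : ∀ N : ℕ, ∑ u ∈ Finset.Icc 1 N, (u:ℚ)^(k-1)
      = (∑ i ∈ range k, bernoulli' i * (k.choose i) * (N:ℚ)^(k-i)) / k := by
    intro N
    rw [← Finset.Ico_add_one_right_eq_Icc, sum_Ico_pow N (k-1)]
    have hk1 : k - 1 + 1 = k := by omega
    rw [hk1, Finset.sum_div]
    refine Finset.sum_congr rfl fun i hi => ?_
    rw [show ((k-1:ℕ):ℚ) + 1 = (k:ℚ) by rw [Nat.cast_sub hk]; ring]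
  have hT : ∑ u ∈ Finset.Icc 1 k,
        ((2:ℚ)^u - 1) * (k.choose u) * bernoulli' u * (n:ℚ)^(k-u)
      = ∑ i ∈ range k, ((2:ℚ)^i - 1) * (k.choose i) * bernoulli' i * (n:ℚ)^(k-i)
        + (2^k - 1) * bernoulli' k := by
    have h1 := Finset.sum_subset
      (f := fun u => ((2:ℚ)^u - 1) * (k.choose u) * bernoulli' u * (n:ℚ)^(k-u))
      (show Finset.Icc 1 k ⊆ range (k+1) by intro x hx; simp at hx ⊢; omega)
      (fun x hx hnx => by
        have hx0 : x = 0 := by simp at hx hnx; omega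
        simp [hx0])
    rw [h1, Finset.sum_range_succ]
    simp
  rw [alt_split k hk n, hS n, hS (n/2), hT]
  rcases Nat.even_or_odd n with he | ho
  · have hsgn : (-1:ℚ)^n = 1 := he.neg_one_pow
    obtain ⟨m, hm⟩ := he
    have hm2 : n / 2 = m := by omega
    have hcast : (n:ℚ) = 2 * m := by rw [hm]; push_cast; ring
    have hmain : ∑ i ∈ range k, (bernoulli' i * (k.choose i) * (n:ℚ)^(k-i)
          - 2^k * (bernoulli' i * (k.choose i) * (m:ℚ)^(k-i))
          + ((2:ℚ)^i - 1) * (k.choose i) * bernoulli' i * (n:ℚ)^(k-i)) = 0 := by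
      apply Finset.sum_eq_zero
      intro i hi
      have hik : i ≤ k := le_of_lt (Finset.mem_range.mp hi)
      have e : (2:ℚ)^k * (m:ℚ)^(k-i) = 2^i * (n:ℚ)^(k-i) := by
        rw [hcast, mul_pow, ← mul_assoc, ← pow_add]
        congr 2
        omega
      linear_combination (-(k.choose i : ℚ) * bernoulli' i) * e
    rw [Finset.sum_add_distrib, Finset.sum_sub_distrib, ← Finset.mul_sum] at hmain
    rw [hsgn, hm2]
    set A := ∑ i ∈ range k, bernoulli' i * (k.choose i : ℚ) * (n:ℚ)^(k-i) with hA
    set B := ∑ i ∈ range k, bernoulli' i * (k.choose i : ℚ) * (m:ℚ)^(k-i) with hB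
    set T := ∑ i ∈ range k, ((2:ℚ)^i - 1) * (k.choose i) * bernoulli' i * (n:ℚ)^(k-i) with hTT
    linear_combination hmain / (k:ℚ)
  · have hsgn : (-1:ℚ)^n = -1 := ho.neg_one_pow
    obtain ⟨m, hm⟩ := ho
    have hm2 : n / 2 = m := by omega
    have hcast : 2 * (m:ℚ) + 1 = (n:ℚ) := by rw [hm]; push_cast; ring
    have hodd := odd_id k (m:ℚ)
    rw [hcast] at hodd
    simp only [Finset.sum_range_succ] at hodd
    simp only [Nat.sub_self, pow_zero, Nat.choose_self, Nat.cast_one, mul_one, one_mul] at hodd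
    have hs : ∑ i ∈ range k, (k.choose i : ℚ) * (2 - 2^i) * bernoulli' i * (n:ℚ)^(k-i)
        = ∑ i ∈ range k, (bernoulli' i * (k.choose i) * (n:ℚ)^(k-i)
            - ((2:ℚ)^i - 1) * (k.choose i) * bernoulli' i * (n:ℚ)^(k-i)) := by
      refine Finset.sum_congr rfl fun i hi => by ring
    rw [hs, Finset.sum_sub_distrib] at hodd
    have hs2 : ∑ i ∈ range k, (k.choose i : ℚ) * bernoulli' i * (m:ℚ)^(k-i)
        = ∑ i ∈ range k, bernoulli' i * (k.choose i : ℚ) * (m:ℚ)^(k-i) :=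
      Finset.sum_congr rfl fun i _ => by ring
    rw [hs2] at hodd
    rw [hsgn, hm2]
    set A := ∑ i ∈ range k, bernoulli' i * (k.choose i : ℚ) * (n:ℚ)^(k-i) with hA
    set B := ∑ i ∈ range k, bernoulli' i * (k.choose i : ℚ) * (m:ℚ)^(k-i) with hB
    set T := ∑ i ∈ range k, ((2:ℚ)^i - 1) * (k.choose i) * bernoulli' i * (n:ℚ)^(k-i) with hTT
    linear_combination hodd / (k:ℚ)
end
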